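/- arXiv:2106.07736 — 2 statements merged into one kernel-verified Lean document; each statement's English description precedes it below -/
import Mathlib

section
/- Assume 0 < θ < 1. Let q ∈ ℝ^p be a unit vector with grad f(q) = 0, and suppose ζ = Aᵀq satisfies, for some index i, ζ_i² = α(q) > 0 and ζ_j = 0 for all j ≠ i. Then q = a_i or q = −a_i, and for every v ∈ ℝ^p one has vᵀ Hess f(q) v ≥ (1−θ)·‖(I_p − qqᵀ)v‖₂². -/
open Matrix MeasureTheory ProbabilityTheory Real
open scoped BigOperators ENNReal

noncomputable section

/-- squared Euclidean norm -/
def l2sq {m : ℕ} (v : Fin m → ℝ) : ℝ := ∑ i, v i ^ 2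

/-- fourth power of the ℓ₄ norm -/
def l4p4 {m : ℕ} (v : Fin m → ℝ) : ℝ := ∑ i, v i ^ 4

/-- Euclidean norm -/
def l2norm {m : ℕ} (v : Fin m → ℝ) : ℝ := Real.sqrt (l2sq v)

/-- squared sup-norm -/
def linfSq {m : ℕ} (v : Fin m → ℝ) : ℝ := ⨆ i, (v i) ^ 2

/-- projection onto the orthogonal complement of q -/
def proj {p : ℕ} (q : Fin p → ℝ) : Matrix (Fin p) (Fin p) ℝ := 1 - Matrix.vecMulVec q q

def zeta {p r : ℕ} (A : Matrix (Fin p) (Fin r) ℝ) (q : Fin p → ℝ) : Fin r → ℝ := Aᵀ *ᵥ q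

/-- population objective -/
def fpop {p r : ℕ} (θ : ℝ) (A : Matrix (Fin p) (Fin r) ℝ) (q : Fin p → ℝ) : ℝ :=
  -(1/4) * ((1 - θ) * l4p4 (zeta A q) + θ * (l2sq (zeta A q)) ^ 2)

/-- Riemannian gradient of the population objective -/
def gradf {p r : ℕ} (θ : ℝ) (A : Matrix (Fin p) (Fin r) ℝ) (q : Fin p → ℝ) : Fin p → ℝ :=
  -((proj q) *ᵥ ((1 - θ) • (A *ᵥ fun j => (zeta A q j) ^ 3)
      + (θ * l2sq (zeta A q)) • (A *ᵥ zeta A q)))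

/-- Riemannian Hessian of the population objective -/
def hessf {p r : ℕ} (θ : ℝ) (A : Matrix (Fin p) (Fin r) ℝ) (q : Fin p → ℝ) :
    Matrix (Fin p) (Fin p) ℝ :=
  -((1 - θ) • (proj q *
      ((3 : ℝ) • (A * Matrix.diagonal (fun j => (zeta A q j) ^ 2) * Aᵀ)
        - l4p4 (zeta A q) • (1 : Matrix (Fin p) (Fin p) ℝ)) * proj q))
  - θ • (proj q *
      (l2sq (zeta A q) • (A * Aᵀ)
        + (2 : ℝ) • (A * Aᵀ * Matrix.vecMulVec q q * (A * Aᵀ))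
        - (l2sq (zeta A q)) ^ 2 • (1 : Matrix (Fin p) (Fin p) ℝ)) * proj q)

/-- quadratic form -/
def qform {p : ℕ} (M : Matrix (Fin p) (Fin p) ℝ) (v : Fin p → ℝ) : ℝ := v ⬝ᵥ (M *ᵥ v)

/-- α(q) -/
def alphaf {p r : ℕ} (θ : ℝ) (A : Matrix (Fin p) (Fin r) ℝ) (q : Fin p → ℝ) : ℝ :=
  l4p4 (zeta A q) + (θ / (1 - θ)) * ((l2sq (zeta A q)) ^ 2 - l2sq (zeta A q))

/-- columns of X -/
def colX {r n : ℕ} (X : Matrix (Fin r) (Fin n) ℝ) (k : Fin n) : Fin r → ℝ := fun i => X i k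

/-- finite-sample objective -/
def Ffun {p r n : ℕ} (θ σ : ℝ) (A : Matrix (Fin p) (Fin r) ℝ) (X : Matrix (Fin r) (Fin n) ℝ)
    (q : Fin p → ℝ) : ℝ :=
  -(1 / (12 * θ * σ ^ 4 * n)) * ∑ k : Fin n, (q ⬝ᵥ (A *ᵥ colX X k)) ^ 4

/-- Riemannian gradient of the finite-sample objective -/
def gradF {p r n : ℕ} (θ σ : ℝ) (A : Matrix (Fin p) (Fin r) ℝ) (X : Matrix (Fin r) (Fin n) ℝ)
    (q : Fin p → ℝ) : Fin p → ℝ :=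
  (-(1 / (3 * θ * σ ^ 4 * n))) •
    ((proj q) *ᵥ ∑ k : Fin n, ((q ⬝ᵥ (A *ᵥ colX X k)) ^ 3) • (A *ᵥ colX X k))

/-- Riemannian Hessian of the finite-sample objective -/
def hessF {p r n : ℕ} (θ σ : ℝ) (A : Matrix (Fin p) (Fin r) ℝ) (X : Matrix (Fin r) (Fin n) ℝ)
    (q : Fin p → ℝ) : Matrix (Fin p) (Fin p) ℝ :=
  (-(1 / (3 * θ * σ ^ 4 * n))) •
    ∑ k : Fin n, proj q *
      ((3 * (q ⬝ᵥ (A *ᵥ colX X k)) ^ 2) • Matrix.vecMulVec (A *ᵥ colX X k) (A *ᵥ colX X k)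
        - ((q ⬝ᵥ (A *ᵥ colX X k)) ^ 4) • (1 : Matrix (Fin p) (Fin p) ℝ)) * proj q

/-- spectral norm of a rectangular matrix -/
def opNorm {m n : ℕ} (M : Matrix (Fin m) (Fin n) ℝ) : ℝ :=
  ‖LinearMap.toContinuousLinearMap (Matrix.toEuclideanLin M)‖

/-- Bernoulli(θ) law on ℝ -/
def bernoulliReal (θ : ℝ) : Measure ℝ :=
  ENNReal.ofReal θ • Measure.dirac (1 : ℝ) + ENNReal.ofReal (1 - θ) • Measure.dirac (0 : ℝ)

/-- Bernoulli–Gaussian law BG(θ, σ²) on ℝ -/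
def bgLaw (θ σ2 : ℝ) : Measure ℝ :=
  ((bernoulliReal θ).prod (gaussianReal 0 σ2.toNNReal)).map fun p => p.1 * p.2

/-- law of a random vector in ℝ^r with i.i.d. BG(θ, σ²) entries -/
def bgVec (r : ℕ) (θ σ2 : ℝ) : Measure (Fin r → ℝ) :=
  Measure.pi fun _ : Fin r => bgLaw θ σ2

/-- law of a random r×n matrix with i.i.d. BG(θ, σ²) entries -/
def bgMatrix (r n : ℕ) (θ σ2 : ℝ) : Measure (Fin r → Fin n → ℝ) :=
  Measure.pi fun _ : Fin r => Measure.pi fun _ : Fin n => bgLaw θ σ2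



/-- auxiliary lemmas for stmt6 -/
lemma l2sq_eq_dot' {m : ℕ} (v : Fin m → ℝ) : l2sq v = v ⬝ᵥ v := by
  simp [l2sq, dotProduct, sq]

lemma dot_self_nonneg' {m : ℕ} (v : Fin m → ℝ) : 0 ≤ v ⬝ᵥ v :=
  Finset.sum_nonneg fun _ _ => mul_self_nonneg _

lemma dot_mulVec_eq {m n : ℕ} (M : Matrix (Fin m) (Fin n) ℝ) (v : Fin m → ℝ) (u : Fin n → ℝ) :
    v ⬝ᵥ (M *ᵥ u) = (Mᵀ *ᵥ v) ⬝ᵥ u := by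
  simp only [Matrix.mulVec, dotProduct, Matrix.transpose_apply, Finset.mul_sum,
    Finset.sum_mul]
  rw [Finset.sum_comm]
  exact Finset.sum_congr rfl fun k _ => Finset.sum_congr rfl fun l _ => by ring

lemma vecMulVec_mulVec' {p : ℕ} (q a : Fin p → ℝ) :
    Matrix.vecMulVec q q *ᵥ a = (q ⬝ᵥ a) • q := by
  ext k
  simp [Matrix.vecMulVec, Matrix.mulVec, dotProduct, Finset.mul_sum, mul_comm, mul_assoc,
    mul_left_comm]

lemma proj_mulVec {p : ℕ} (q a : Fin p → ℝ) :
    proj q *ᵥ a = a - (q ⬝ᵥ a) • q := by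
  simp [proj, Matrix.sub_mulVec, vecMulVec_mulVec']

lemma projT {p : ℕ} (q : Fin p → ℝ) : (proj q)ᵀ = proj q := by
  ext k l
  simp [proj, Matrix.vecMulVec_apply, Matrix.one_apply, eq_comm, mul_comm]

lemma proj_dot {p : ℕ} (q x y : Fin p → ℝ) :
    x ⬝ᵥ (proj q *ᵥ y) = (proj q *ᵥ x) ⬝ᵥ y := by
  rw [dot_mulVec_eq, projT]


theorem stmt6 (p r : ℕ) (hr : 1 ≤ r) (hrp : r ≤ p)
    (A : Matrix (Fin p) (Fin r) ℝ) (hA : Aᵀ * A = 1)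
    (θ : ℝ) (hθ0 : 0 < θ) (hθ : θ < 1)
    (q : Fin p → ℝ) (hq : l2sq q = 1)
    (hgrad : gradf θ A q = 0)
    (i : Fin r) (hi : (zeta A q i) ^ 2 = alphaf θ A q) (hpos : 0 < alphaf θ A q)
    (hj : ∀ j : Fin r, j ≠ i → zeta A q j = 0) :
    (q = (fun k => A k i) ∨ q = (fun k => -A k i)) ∧
    (∀ v : Fin p → ℝ, (1 - θ) * l2sq ((proj q) *ᵥ v) ≤ qform (hessf θ A q) v) := by
  set c := zeta A q i with hc
  have h1θ : (0:ℝ) < 1 - θ := by linarith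
  have hζ2 : l2sq (zeta A q) = c ^ 2 := by
    rw [l2sq, Finset.sum_eq_single i]
    · intro b _ hb; rw [hj b hb]; ring
    · intro h; exact absurd (Finset.mem_univ i) h
  have hζ4 : l4p4 (zeta A q) = c ^ 4 := by
    rw [l4p4, Finset.sum_eq_single i]
    · intro b _ hb; rw [hj b hb]; ring
    · intro h; exact absurd (Finset.mem_univ i) h
  have hcpos : 0 < c ^ 2 := by rw [hi]; exact hpos
  have h := hi
  rw [alphaf, hζ2, hζ4] at h
  have hcancel : (1 - θ) * (θ / (1 - θ)) = θ := by field_simp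
  have hm : (1 - θ) * c ^ 2 = (1 - θ) * c ^ 4 + θ * ((c ^ 2) ^ 2 - c ^ 2) := by
    calc (1 - θ) * c ^ 2 = (1 - θ) * (c ^ 4 + θ / (1 - θ) * ((c ^ 2) ^ 2 - c ^ 2)) := by rw [← h]
      _ = (1 - θ) * c ^ 4 + (1 - θ) * (θ / (1 - θ)) * ((c ^ 2) ^ 2 - c ^ 2) := by ring
      _ = (1 - θ) * c ^ 4 + θ * ((c ^ 2) ^ 2 - c ^ 2) := by rw [hcancel]
  have hzz : c ^ 2 * (c ^ 2 - 1) = 0 := by linear_combination -hm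
  have hc2 : c ^ 2 = 1 := by
    rcases mul_eq_zero.mp hzz with h' | h'
    · linarith
    · linarith
  have hc3 : c ^ 3 = c := by
    have : c ^ 3 = c ^ 2 * c := by ring
    rw [this, hc2, one_mul]
  have hcne : c ≠ 0 := by intro h'; rw [h'] at hc2; norm_num at hc2
  have hAz3 : A *ᵥ (fun j => zeta A q j ^ 3) = fun k => c ^ 3 * A k i := by
    funext k
    show ∑ j, A k j * zeta A q j ^ 3 = c ^ 3 * A k i
    rw [Finset.sum_eq_single i]
    · ring
    · intro b _ hb; rw [hj b hb]; ring
    · intro h'; exact absurd (Finset.mem_univ i) h'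
  have hAz : A *ᵥ zeta A q = fun k => c * A k i := by
    funext k
    show ∑ j, A k j * zeta A q j = c * A k i
    rw [Finset.sum_eq_single i]
    · ring
    · intro b _ hb; rw [hj b hb]; ring
    · intro h'; exact absurd (Finset.mem_univ i) h'
  have hqa_dot : q ⬝ᵥ (fun k => A k i) = c := by
    rw [hc]
    show ∑ k, q k * A k i = zeta A q i
    show ∑ k, q k * A k i = ∑ k, Aᵀ i k * q k
    exact Finset.sum_congr rfl fun k _ => by simp [Matrix.transpose_apply, mul_comm]
  have hcoef : (1 - θ) * c ^ 3 + θ * c ^ 2 * c = c := by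
    have : (1 - θ) * c ^ 3 + θ * c ^ 2 * c = c ^ 3 := by ring
    rw [this, hc3]
  have hinner : (1 - θ) • (A *ᵥ fun j => zeta A q j ^ 3)
      + (θ * l2sq (zeta A q)) • (A *ᵥ zeta A q) = c • (fun k => A k i) := by
    rw [hAz3, hAz, hζ2]
    funext k
    simp only [Pi.add_apply, Pi.smul_apply, smul_eq_mul]
    calc (1 - θ) * (c ^ 3 * A k i) + θ * c ^ 2 * (c * A k i)
        = ((1 - θ) * c ^ 3 + θ * c ^ 2 * c) * A k i := by ring
      _ = c * A k i := by rw [hcoef]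
  have hgrad' : proj q *ᵥ (c • fun k => A k i) = 0 := by
    have h0 := hgrad
    rw [gradf, hinner] at h0
    simpa [neg_eq_zero] using h0
  have hPa : proj q *ᵥ (fun k => A k i) = 0 := by
    rw [Matrix.mulVec_smul] at hgrad'
    exact (smul_eq_zero.mp hgrad').resolve_left hcne
  have ha : (fun k => A k i) = c • q := by
    have h0 := hPa
    rw [proj_mulVec, hqa_dot, sub_eq_zero] at h0
    exact h0
  have hq_eq : q = fun k => c * A k i := by
    funext k
    have h0 : A k i = c * q k := congrFun ha k
    calc q k = c ^ 2 * q k := by rw [hc2]; ring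
      _ = c * (c * q k) := by ring
      _ = c * A k i := by rw [← h0]
  have hcc : c = 1 ∨ c = -1 := mul_self_eq_one_iff.mp (by linear_combination hc2)
  constructor
  · rcases hcc with h' | h'
    · left; rw [hq_eq]; funext k; rw [h', one_mul]
    · right; rw [hq_eq]; funext k; rw [h']; ring
  · intro v
    set w := proj q *ᵥ v with hw
    set u := Aᵀ *ᵥ w with hu
    have hqq : q ⬝ᵥ q = 1 := by rw [← l2sq_eq_dot', hq]
    have hqw : q ⬝ᵥ w = 0 := by
      rw [hw, proj_mulVec, dotProduct_sub, dotProduct_smul, hqq, smul_eq_mul, mul_one, sub_self]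
    have haw : (fun k => A k i) ⬝ᵥ w = 0 := by
      rw [ha, smul_dotProduct, hqw, smul_eq_mul, mul_zero]
    have hui : u i = 0 := by
      rw [hu]
      show ∑ k, Aᵀ i k * w k = 0
      rw [← haw]
      exact Finset.sum_congr rfl fun k _ => by simp [Matrix.transpose_apply]
    have hAAq : (A * Aᵀ) *ᵥ q = q := by
      rw [← Matrix.mulVec_mulVec]
      show A *ᵥ zeta A q = q
      rw [hAz]
      exact hq_eq.symm
    have hqAAw : q ⬝ᵥ ((A * Aᵀ) *ᵥ w) = 0 := by
      rw [dot_mulVec_eq, Matrix.transpose_mul, Matrix.transpose_transpose, hAAq]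
      exact hqw
    have sandwich : ∀ M : Matrix (Fin p) (Fin p) ℝ,
        v ⬝ᵥ ((proj q * M * proj q) *ᵥ v) = w ⬝ᵥ (M *ᵥ w) := by
      intro M
      rw [← Matrix.mulVec_mulVec, ← Matrix.mulVec_mulVec, proj_dot]
    have e1 : w ⬝ᵥ ((A * Matrix.diagonal (fun j => zeta A q j ^ 2) * Aᵀ) *ᵥ w) = 0 := by
      rw [← Matrix.mulVec_mulVec, ← Matrix.mulVec_mulVec, dot_mulVec_eq, ← hu]
      show ∑ j, u j * (Matrix.diagonal (fun j => zeta A q j ^ 2) *ᵥ u) j = 0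
      rw [Finset.sum_eq_zero]
      intro j _
      by_cases hji : j = i
      · subst hji; rw [Matrix.mulVec_diagonal]; rw [hui]; ring
      · rw [Matrix.mulVec_diagonal, hj j hji]; ring
    have e2 : w ⬝ᵥ ((A * Aᵀ) *ᵥ w) = u ⬝ᵥ u := by
      rw [← Matrix.mulVec_mulVec, dot_mulVec_eq, ← hu]
    have e3 : w ⬝ᵥ ((A * Aᵀ * Matrix.vecMulVec q q * (A * Aᵀ)) *ᵥ w) = 0 := by
      rw [← Matrix.mulVec_mulVec, ← Matrix.mulVec_mulVec, vecMulVec_mulVec', hqAAw, zero_smul,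
        Matrix.mulVec_zero, dotProduct_zero]
    have e4 : u ⬝ᵥ u ≤ w ⬝ᵥ w := by
      have h0 : 0 ≤ (w - A *ᵥ u) ⬝ᵥ (w - A *ᵥ u) := dot_self_nonneg' _
      have k1 : w ⬝ᵥ (A *ᵥ u) = u ⬝ᵥ u := by rw [dot_mulVec_eq, ← hu]
      have k2 : (A *ᵥ u) ⬝ᵥ (A *ᵥ u) = u ⬝ᵥ u := by
        rw [dot_mulVec_eq, Matrix.mulVec_mulVec, hA, Matrix.one_mulVec]
      have k3 : (A *ᵥ u) ⬝ᵥ w = u ⬝ᵥ u := by rw [dotProduct_comm]; exact k1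
      simp only [dotProduct_sub, sub_dotProduct] at h0
      rw [k1, k2, k3] at h0
      linarith
    have hζ2' : l2sq (zeta A q) = 1 := by rw [hζ2, hc2]
    have hζ4' : l4p4 (zeta A q) = 1 := by
      rw [hζ4]
      calc c ^ 4 = (c ^ 2) ^ 2 := by ring
        _ = 1 := by rw [hc2]; norm_num
    rw [qform, hessf, hζ2', hζ4']
    rw [Matrix.sub_mulVec, Matrix.neg_mulVec, Matrix.smul_mulVec, Matrix.smul_mulVec,
      dotProduct_sub, dotProduct_neg, dotProduct_smul, dotProduct_smul, sandwich, sandwich]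
    simp only [Matrix.sub_mulVec, Matrix.add_mulVec, Matrix.smul_mulVec,
      Matrix.one_mulVec, dotProduct_sub, dotProduct_add, dotProduct_smul, smul_eq_mul, one_smul]
    rw [e1, e2, e3]
    rw [l2sq_eq_dot']
    have hθw : 0 ≤ θ * (w ⬝ᵥ w - u ⬝ᵥ u) := mul_nonneg hθ0.le (by linarith)
    nlinarith [hθw]


end
end

section
/- Assume 0 < θ < 1. Let q ∈ ℝ^p be a unit vector with grad f(q) = 0, and suppose ζ = Aᵀq has exactly k nonzero entries, where 2 ≤ k ≤ r, each nonzero entry satisfying ζ_j² = α(q) > 0. Then there exists a unit vector v ∈ ℝ^p with vᵀq = 0 such that vᵀ Hess f(q) v ≤ −2(1−θ)/k < 0. -/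
open Matrix MeasureTheory ProbabilityTheory Real
open scoped BigOperators ENNReal

noncomputable section

lemma sum_two {n : ℕ} {i j : Fin n} (hij : i ≠ j) (f : Fin n → ℝ)
    (h : ∀ b, b ≠ i → b ≠ j → f b = 0) : ∑ b, f b = f i + f j := by
  rw [← Finset.sum_pair hij]
  refine (Finset.sum_subset (Finset.subset_univ _) ?_).symm
  intro b _ hb
  simp only [Finset.mem_insert, Finset.mem_singleton, not_or] at hb
  exact h b hb.1 hb.2

theorem stmt7 (p r : ℕ) (hr : 1 ≤ r) (hrp : r ≤ p)
    (A : Matrix (Fin p) (Fin r) ℝ) (hA : Aᵀ * A = 1)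
    (θ : ℝ) (hθ0 : 0 < θ) (hθ : θ < 1)
    (q : Fin p → ℝ) (hq : l2sq q = 1)
    (hgrad : gradf θ A q = 0)
    (k : ℕ) (hk2 : 2 ≤ k) (hkr : k ≤ r)
    (hcard : (Finset.univ.filter fun j : Fin r => zeta A q j ≠ 0).card = k)
    (hval : ∀ j : Fin r, zeta A q j ≠ 0 → (zeta A q j) ^ 2 = alphaf θ A q)
    (hpos : 0 < alphaf θ A q) :
    ∃ v : Fin p → ℝ, l2sq v = 1 ∧ v ⬝ᵥ q = 0 ∧
      qform (hessf θ A q) v ≤ -(2*(1-θ))/k ∧ qform (hessf θ A q) v < 0 := by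
  classical
  set ζ : Fin r → ℝ := zeta A q with hζdef
  set α : ℝ := alphaf θ A q with hαdef
  have hAc : ∀ a b : Fin r, (∑ x, A x a * A x b) = if a = b then (1:ℝ) else 0 := by
    intro a b
    have h := congrFun (congrFun hA a) b
    simpa [Matrix.mul_apply, Matrix.one_apply, Matrix.transpose_apply] using h
  have hζeq : ∀ b, ζ b = ∑ x, A x b * q x := by
    intro b
    simp [hζdef, zeta, Matrix.mulVec, dotProduct, Matrix.transpose_apply]
  have hK2 : (2:ℝ) ≤ (k:ℝ) := by exact_mod_cast hk2
  have hKpos : (0:ℝ) < (k:ℝ) := by linarith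
  have h1θ : (0:ℝ) < 1 - θ := by linarith
  -- sums of powers of ζ
  set S := Finset.univ.filter (fun j : Fin r => ζ j ≠ 0) with hS
  have hsubset : ∀ (g : Fin r → ℝ), (∀ b, ζ b = 0 → g b = 0) → ∑ b, g b = ∑ b ∈ S, g b := by
    intro g hg
    refine (Finset.sum_subset (Finset.filter_subset _ _) ?_).symm
    intro b _ hb
    simp only [hS, Finset.mem_filter, Finset.mem_univ, true_and, not_not] at hb
    exact hg b hb
  have hz2 : l2sq ζ = (k:ℝ) * α := by
    rw [l2sq, hsubset (fun b => ζ b ^ 2) (fun b hb => by simp [hb])]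
    rw [Finset.sum_congr rfl (fun b hb => hval b (by simpa [hS, Finset.mem_filter] using hb))]
    rw [Finset.sum_const, hcard, nsmul_eq_mul]
  have hz4 : l4p4 ζ = (k:ℝ) * α ^ 2 := by
    rw [l4p4, hsubset (fun b => ζ b ^ 4) (fun b hb => by simp [hb])]
    have : ∀ b ∈ S, ζ b ^ 4 = α ^ 2 := by
      intro b hb
      have h := hval b (by simpa [hS, Finset.mem_filter] using hb)
      calc ζ b ^ 4 = (ζ b ^ 2) ^ 2 := by ring
        _ = α ^ 2 := by rw [h]
    rw [Finset.sum_congr rfl this, Finset.sum_const, hcard, nsmul_eq_mul]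
  -- α = 1/k
  have hαeq : α = (k:ℝ) * α ^ 2 + θ / (1 - θ) * (((k:ℝ) * α) ^ 2 - (k:ℝ) * α) := by
    calc α = l4p4 ζ + θ / (1 - θ) * ((l2sq ζ) ^ 2 - l2sq ζ) := by
            rw [hαdef, alphaf, ← hζdef]
      _ = (k:ℝ) * α ^ 2 + θ / (1 - θ) * (((k:ℝ) * α) ^ 2 - (k:ℝ) * α) := by
            rw [hz2, hz4]
  have hKα : (k:ℝ) * α = 1 := by
    have h1θ' : (1:ℝ) - θ ≠ 0 := ne_of_gt h1θ
    have h3 : (1-θ) * α = (1-θ) * ((k:ℝ) * α ^ 2) + θ * (((k:ℝ) * α) ^ 2 - (k:ℝ) * α) := by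
      field_simp at hαeq
      linear_combination α * hαeq
    have hfact : (((1-θ) * α + θ * ((k:ℝ) * α)) * (1 - (k:ℝ) * α)) = 0 := by
      linear_combination h3
    rcases mul_eq_zero.mp hfact with h | h
    · exfalso
      have : 0 < (1-θ) * α + θ * ((k:ℝ) * α) := by
        have := mul_pos h1θ hpos
        have := mul_pos hθ0 (mul_pos hKpos hpos)
        linarith
      linarith
    · linarith
  -- pick two indices in the support
  obtain ⟨i, hi, j, hj, hij⟩ : ∃ i ∈ S, ∃ j ∈ S, i ≠ j := by
    refine Finset.one_lt_card.mp ?_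
    rw [hS, hcard]; omega
  have hζi2 : ζ i ^ 2 = α := hval i (by simpa [hS, Finset.mem_filter] using hi)
  have hζj2 : ζ j ^ 2 = α := hval j (by simpa [hS, Finset.mem_filter] using hj)
  -- the direction
  set u : Fin p → ℝ := fun x => ζ j * A x i - ζ i * A x j with hu
  set w : Fin r → ℝ := fun b => (if b = i then ζ j else 0) - (if b = j then ζ i else 0) with hw
  have hwb : ∀ b, (∑ x, A x b * u x) = w b := by
    intro b
    have h1 : ∀ x, A x b * u x = ζ j * (A x b * A x i) - ζ i * (A x b * A x j) := by
      intro x; simp only [hu]; ring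
    rw [Finset.sum_congr rfl (fun x _ => h1 x), Finset.sum_sub_distrib,
      ← Finset.mul_sum, ← Finset.mul_sum, hAc, hAc, hw]
    simp only [mul_ite, mul_one, mul_zero]
  have hqu : q ⬝ᵥ u = 0 := by
    have h1 : ∀ x, q x * u x = ζ j * (A x i * q x) - ζ i * (A x j * q x) := by
      intro x; simp only [hu]; ring
    rw [dotProduct, Finset.sum_congr rfl (fun x _ => h1 x), Finset.sum_sub_distrib,
      ← Finset.mul_sum, ← Finset.mul_sum, ← hζeq, ← hζeq]
    ring
  have hwi : w i = ζ j := by simp [hw, hij]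
  have hwj : w j = -ζ i := by simp [hw, Ne.symm hij]
  have hw0 : ∀ b, b ≠ i → b ≠ j → w b = 0 := by
    intro b h1 h2; simp [hw, h1, h2]
  have huu : u ⬝ᵥ u = 2 * α := by
    have h1 : ∀ x, u x * u x = ζ j * (A x i * u x) - ζ i * (A x j * u x) := by
      intro x; simp only [hu]; ring
    rw [dotProduct, Finset.sum_congr rfl (fun x _ => h1 x), Finset.sum_sub_distrib,
      ← Finset.mul_sum, ← Finset.mul_sum, hwb, hwb, hwi, hwj]
    linear_combination hζj2 + hζi2
  have hwAt : Aᵀ *ᵥ u = w := by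
    funext b
    rw [← hwb b]
    simp [Matrix.mulVec, dotProduct, Matrix.transpose_apply]
  have hvmA : u ᵥ* A = w := by rw [← Matrix.mulVec_transpose, hwAt]
  -- sums over Fin r
  have hwDw : ∑ b, w b * (ζ b ^ 2 * w b) = 2 * α ^ 2 := by
    rw [sum_two hij _ (fun b h1 h2 => by rw [hw0 b h1 h2]; ring), hwi, hwj]
    linear_combination (2 * ζ j ^ 2) * hζi2 + 2 * α * hζj2
  have hww : w ⬝ᵥ w = 2 * α := by
    rw [dotProduct, sum_two hij _ (fun b h1 h2 => by rw [hw0 b h1 h2]; ring),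
      hwi, hwj]
    have : ζ j * ζ j + -ζ i * -ζ i = ζ j ^ 2 + ζ i ^ 2 := by ring
    rw [this, hζi2, hζj2]; ring
  have hζw : ζ ⬝ᵥ w = 0 := by
    rw [dotProduct, sum_two hij _ (fun b h1 h2 => by rw [hw0 b h1 h2]; ring),
      hwi, hwj]
    ring
  -- projection fixes u
  have hqu' : ∑ y, q y * u y = 0 := hqu
  have hPu : proj q *ᵥ u = u := by
    funext x
    rw [proj, Matrix.sub_mulVec, Matrix.one_mulVec]
    have : (Matrix.vecMulVec q q *ᵥ u) x = q x * ∑ y, q y * u y := by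
      simp [Matrix.mulVec, dotProduct, Matrix.vecMulVec_apply, mul_assoc,
        Finset.mul_sum]
    simp [this, hqu']
  have huP : u ᵥ* proj q = u := by
    funext x
    rw [proj, Matrix.vecMul_sub, Matrix.vecMul_one]
    have : (u ᵥ* Matrix.vecMulVec q q) x = (∑ y, q y * u y) * q x := by
      simp [Matrix.vecMul, dotProduct, Matrix.vecMulVec_apply, Finset.sum_mul]
      ring_nf
      exact Finset.sum_congr rfl fun y _ => by ring
    simp [this, hqu']
  have hred : ∀ M : Matrix (Fin p) (Fin p) ℝ,
      u ⬝ᵥ ((proj q * M * proj q) *ᵥ u) = u ⬝ᵥ (M *ᵥ u) := by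
    intro M
    rw [← Matrix.mulVec_mulVec, hPu, ← Matrix.mulVec_mulVec, Matrix.dotProduct_mulVec, huP]
  -- the three core quadratic forms
  have hT1 : u ⬝ᵥ ((A * Matrix.diagonal (fun b => ζ b ^ 2) * Aᵀ) *ᵥ u) = 2 * α ^ 2 := by
    rw [← Matrix.mulVec_mulVec, ← Matrix.mulVec_mulVec, hwAt, Matrix.dotProduct_mulVec, hvmA]
    rw [dotProduct]
    rw [Finset.sum_congr rfl (fun b _ => by rw [Matrix.mulVec_diagonal])]
    exact hwDw
  have hAATu : (A * Aᵀ) *ᵥ u = A *ᵥ w := by rw [← Matrix.mulVec_mulVec, hwAt]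
  have hT0 : u ⬝ᵥ ((A * Aᵀ) *ᵥ u) = 2 * α := by
    rw [hAATu, Matrix.dotProduct_mulVec, hvmA, hww]
  have hqA : q ᵥ* A = ζ := by rw [← Matrix.mulVec_transpose, hζdef]; rfl
  have hqAw : q ⬝ᵥ (A *ᵥ w) = 0 := by
    rw [Matrix.dotProduct_mulVec, hqA, hζw]
  have hmid0 : Matrix.vecMulVec q q *ᵥ (A *ᵥ w) = 0 := by
    funext x
    have : (Matrix.vecMulVec q q *ᵥ (A *ᵥ w)) x = q x * (q ⬝ᵥ (A *ᵥ w)) := by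
      simp [Matrix.mulVec, dotProduct, Matrix.vecMulVec_apply, mul_assoc,
        Finset.mul_sum]
    rw [Pi.zero_apply, this, hqAw, mul_zero]
  have hT2 : u ⬝ᵥ ((A * Aᵀ * Matrix.vecMulVec q q * (A * Aᵀ)) *ᵥ u) = 0 := by
    rw [← Matrix.mulVec_mulVec, hAATu, ← Matrix.mulVec_mulVec, hmid0, Matrix.mulVec_zero,
      dotProduct_zero]
  -- assemble the Hessian quadratic form on u
  have hHu : u ⬝ᵥ (hessf θ A q *ᵥ u)
      = -((1-θ) * (3 * (2 * α ^ 2) - ((k:ℝ) * α ^ 2) * (2 * α)))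
        - θ * (((k:ℝ) * α) * (2 * α) + 2 * 0 - ((k:ℝ) * α) ^ 2 * (2 * α)) := by
    rw [hessf, ← hζdef, hz2, hz4]
    simp only [Matrix.sub_mulVec, Matrix.neg_mulVec, Matrix.smul_mulVec,
      dotProduct_sub, dotProduct_neg, dotProduct_smul]
    rw [hred, hred]
    simp only [Matrix.sub_mulVec, Matrix.add_mulVec, Matrix.smul_mulVec,
      Matrix.one_mulVec, dotProduct_sub, dotProduct_add,
      dotProduct_smul]
    rw [hT1, hT0, hT2, huu]
    simp only [smul_eq_mul]
    try ring
  -- define v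
  set c : ℝ := (Real.sqrt (2 * α))⁻¹ with hc
  have h2α : (0:ℝ) < 2 * α := by linarith
  have hsq : Real.sqrt (2 * α) ^ 2 = 2 * α := Real.sq_sqrt (le_of_lt h2α)
  have hsqpos : 0 < Real.sqrt (2 * α) := Real.sqrt_pos.mpr h2α
  have hc2 : c ^ 2 = (2 * α)⁻¹ := by
    rw [hc, inv_pow, hsq]
  have hqf : qform (hessf θ A q) (c • u) = c ^ 2 * (u ⬝ᵥ (hessf θ A q *ᵥ u)) := by
    rw [qform, Matrix.mulVec_smul, dotProduct_smul, smul_dotProduct]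
    simp only [smul_eq_mul]; ring
  have hαv : α = ((k:ℝ))⁻¹ := by
    have hk0 : (k:ℝ) ≠ 0 := ne_of_gt hKpos
    field_simp
    linear_combination hKα
  have hk0 : (k:ℝ) ≠ 0 := ne_of_gt hKpos
  have hfinal : qform (hessf θ A q) (c • u) = -(2*(1-θ))/(k:ℝ) := by
    rw [hqf, hHu, hc2, hαv]
    field_simp
    ring
  refine ⟨c • u, ?_, ?_, ?_, ?_⟩
  · -- unit norm
    have h5 : l2sq (c • u) = c ^ 2 * (u ⬝ᵥ u) := by
      rw [l2sq, dotProduct, Finset.mul_sum]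
      exact Finset.sum_congr rfl fun x _ => by simp [Pi.smul_apply, smul_eq_mul]; ring
    rw [h5, huu, hc2, inv_mul_cancel₀ (ne_of_gt h2α)]
  · -- orthogonal to q
    rw [smul_dotProduct, dotProduct_comm, hqu, smul_zero]
  · exact le_of_eq hfinal
  · rw [hfinal]
    exact div_neg_of_neg_of_pos (by linarith) hKpos

end
end
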